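/- Fix integers d ≥ 1, p ≥ 2, and n ≥ t ≥ 1, a real Γ > 0, and a database S ∈ (X^d)^n. If L(0, S) < t − 2Γ, then there exists r ∈ { j/(2p) : j ∈ ℕ, 0 ≤ j ≤ 2p·⌈√d⌉ } such that min{ t − L(r/2, S), L(r, S) − t + 4Γ } ≥ 2Γ. -/

import Mathlib

/-- Number of entries of the database `S` inside the closed ball of radius `r` around `x`. -/
noncomputable def ballCount {d n : ℕ} (S : Fin n → EuclideanSpace ℝ (Fin d))
    (x : EuclideanSpace ℝ (Fin d)) (r : ℝ) : ℕ :=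
  Nat.card {i : Fin n // dist (S i) x ≤ r}

/-- `B̄_r(x,S) = min{B_r(x,S), t}`, with value `0` for `r < 0`. -/
noncomputable def cappedBallCount {d n : ℕ} (t : ℕ) (S : Fin n → EuclideanSpace ℝ (Fin d))
    (r : ℝ) (x : EuclideanSpace ℝ (Fin d)) : ℕ :=
  if r < 0 then 0 else min (ballCount S x r) t

/-- `L(r,S)`: the average of the `t` largest values of `B̄_r(x_i, S)` over `t` distinct
indices `i`, i.e. `(1/t)` times the maximum over sets `I` of `t` distinct indices of
`∑_{i ∈ I} B̄_r(x_i, S)`. -/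
noncomputable def Lfun {d n : ℕ} (t : ℕ) (S : Fin n → EuclideanSpace ℝ (Fin d)) (r : ℝ) : ℝ :=
  (((Finset.univ.powersetCard t).sup fun I : Finset (Fin n) =>
      ∑ i ∈ I, cappedBallCount t S r (S i) : ℕ) : ℝ) / t

/-- The grid `X = {0, 1/(p-1), …, 1} ⊆ ℝ` with `p ≥ 2` equally spaced points. -/
def gridSet (p : ℕ) : Set ℝ := {x : ℝ | ∃ j : ℕ, j ≤ p - 1 ∧ x = (j : ℝ) / ((p : ℝ) - 1)}

lemma ballCount_mono {d n : ℕ} (S : Fin n → EuclideanSpace ℝ (Fin d))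
    (x : EuclideanSpace ℝ (Fin d)) {r1 r2 : ℝ} (h : r1 ≤ r2) :
    ballCount S x r1 ≤ ballCount S x r2 := by
  apply Nat.card_le_card_of_injective (fun i => (⟨i.1, le_trans i.2 h⟩ : {i : Fin n // dist (S i) x ≤ r2}))
  intro a b hab
  simpa [Subtype.ext_iff] using hab


lemma capped_mono {d n : ℕ} (t : ℕ) (S : Fin n → EuclideanSpace ℝ (Fin d))
    {r1 r2 : ℝ} (h : r1 ≤ r2) (x : EuclideanSpace ℝ (Fin d)) :
    cappedBallCount t S r1 x ≤ cappedBallCount t S r2 x := by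
  unfold cappedBallCount
  split_ifs with h1 h2
  · exact Nat.zero_le _
  · exact Nat.zero_le _
  · linarith
  · exact min_le_min (ballCount_mono S x h) le_rfl

lemma Lfun_mono {d n : ℕ} (t : ℕ) (S : Fin n → EuclideanSpace ℝ (Fin d))
    {r1 r2 : ℝ} (h : r1 ≤ r2) : Lfun t S r1 ≤ Lfun t S r2 := by
  unfold Lfun
  have hsup : ((Finset.univ.powersetCard t).sup fun I : Finset (Fin n) =>
      ∑ i ∈ I, cappedBallCount t S r1 (S i)) ≤
      ((Finset.univ.powersetCard t).sup fun I : Finset (Fin n) =>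
      ∑ i ∈ I, cappedBallCount t S r2 (S i)) :=
    Finset.sup_mono_fun fun I _ => Finset.sum_le_sum fun i _ => capped_mono t S h (S i)
  rcases Nat.eq_zero_or_pos t with h0 | h0
  · simp [h0]
  · exact (div_le_div_iff_of_pos_right (by exact_mod_cast h0)).mpr (by exact_mod_cast hsup)

lemma coord_dist_le {d : ℕ} (x y : EuclideanSpace ℝ (Fin d)) (c : Fin d) :
    |x c - y c| ≤ dist x y := by
  rw [EuclideanSpace.dist_eq]
  have h1 : (x c - y c)^2 ≤ ∑ i, (x i - y i)^2 :=
    Finset.single_le_sum (f := fun i => (x i - y i)^2) (fun i _ => sq_nonneg _) (Finset.mem_univ c)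
  simp only [Real.dist_eq, sq_abs]
  calc |x c - y c| = Real.sqrt ((x c - y c)^2) := (Real.sqrt_sq_eq_abs _).symm
    _ ≤ _ := Real.sqrt_le_sqrt h1

lemma grid_mem_Icc {p : ℕ} (hp : 2 ≤ p) {a : ℝ} (ha : a ∈ gridSet p) : a ∈ Set.Icc (0:ℝ) 1 := by
  obtain ⟨j, hj, rfl⟩ := ha
  have hq : (1:ℝ) ≤ (p:ℝ) - 1 := by
    have : (2:ℝ) ≤ p := by exact_mod_cast hp
    linarith
  have hjr : (j:ℝ) ≤ (p:ℝ) - 1 := by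
    have : (j:ℝ) ≤ ((p-1 : ℕ):ℝ) := by exact_mod_cast hj
    rw [Nat.cast_sub (by omega)] at this
    simpa using this
  constructor
  · positivity
  · rw [div_le_one (by linarith)]; exact hjr

lemma grid_gap {p : ℕ} (hp : 2 ≤ p) {a b : ℝ} (ha : a ∈ gridSet p) (hb : b ∈ gridSet p)
    (hab : a ≠ b) : 1 / ((p:ℝ) - 1) ≤ |a - b| := by
  obtain ⟨j1, hj1, rfl⟩ := ha
  obtain ⟨j2, hj2, rfl⟩ := hb
  have hq : (1:ℝ) ≤ (p:ℝ) - 1 := by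
    have : (2:ℝ) ≤ p := by exact_mod_cast hp
    linarith
  have hqpos : (0:ℝ) < (p:ℝ) - 1 := by linarith
  have hne : j1 ≠ j2 := fun h => hab (by rw [h])
  have h1 : (1:ℝ) ≤ |(j1:ℝ) - (j2:ℝ)| := by
    rcases hne.lt_or_gt with h | h
    · have : (j1:ℝ) + 1 ≤ j2 := by exact_mod_cast h
      rw [abs_sub_comm, abs_of_nonneg (by linarith)]; linarith
    · have : (j2:ℝ) + 1 ≤ j1 := by exact_mod_cast h
      rw [abs_of_nonneg (by linarith)]; linarith
  rw [div_sub_div_same, abs_div, abs_of_pos hqpos, div_le_div_iff₀ hqpos hqpos]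
  nlinarith

lemma ballCount_ge_n {d n : ℕ} (S : Fin n → EuclideanSpace ℝ (Fin d))
    (hS : ∀ i c, S i c ∈ Set.Icc (0:ℝ) 1) (x : Fin n) {R : ℝ} (hR : Real.sqrt d ≤ R) :
    n ≤ ballCount S (S x) R := by
  have key : ∀ i : Fin n, dist (S i) (S x) ≤ R := by
    intro i
    have hsum : ∑ c, (S i c - S x c)^2 ≤ (d:ℝ) := by
      calc ∑ c, (S i c - S x c)^2 ≤ ∑ c : Fin d, (1:ℝ) := by
            refine Finset.sum_le_sum fun c _ => ?_
            have h1 := hS i c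
            have h2 := hS x c
            simp only [Set.mem_Icc] at h1 h2
            nlinarith [h1.1, h1.2, h2.1, h2.2]
        _ = d := by simp
    calc dist (S i) (S x) ≤ Real.sqrt d := by
          rw [EuclideanSpace.dist_eq]
          simp only [Real.dist_eq, sq_abs]
          exact Real.sqrt_le_sqrt hsum
      _ ≤ R := hR
  have : Nat.card (Fin n) ≤ ballCount S (S x) R := by
    apply Nat.card_le_card_of_injective (fun i => (⟨i, key i⟩ : {i : Fin n // dist (S i) (S x) ≤ R}))
    intro a b hab
    simpa [Subtype.ext_iff] using hab
  simpa using this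

lemma Lfun_big {d n t : ℕ} (ht : 1 ≤ t) (htn : t ≤ n) (S : Fin n → EuclideanSpace ℝ (Fin d))
    (hS : ∀ i c, S i c ∈ Set.Icc (0:ℝ) 1) {R : ℝ} (hR : Real.sqrt d ≤ R) :
    (t:ℝ) ≤ Lfun t S R := by
  have hR0 : (0:ℝ) ≤ R := le_trans (Real.sqrt_nonneg _) hR
  obtain ⟨I, _, hIcard⟩ := Finset.exists_subset_card_eq
    (show t ≤ (Finset.univ : Finset (Fin n)).card by simpa using htn)
  have hImem : I ∈ (Finset.univ : Finset (Fin n)).powersetCard t := by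
    rw [Finset.mem_powersetCard]
    exact ⟨Finset.subset_univ I, hIcard⟩
  have hcap : ∀ i : Fin n, cappedBallCount t S R (S i) = t := by
    intro i
    rw [cappedBallCount, if_neg (not_lt.mpr hR0)]
    exact min_eq_right (le_trans htn (ballCount_ge_n S hS i hR))
  have hsum : ∑ i ∈ I, cappedBallCount t S R (S i) = t * t := by
    rw [Finset.sum_congr rfl fun i _ => hcap i]
    simp [hIcard, mul_comm]
  have hsup : t * t ≤ (Finset.univ.powersetCard t).sup fun I : Finset (Fin n) =>
      ∑ i ∈ I, cappedBallCount t S R (S i) := by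
    have := Finset.le_sup (f := fun I : Finset (Fin n) =>
      ∑ i ∈ I, cappedBallCount t S R (S i)) hImem
    rw [hsum] at this
    exact this
  rw [Lfun, le_div_iff₀ (by exact_mod_cast ht)]
  calc (t:ℝ) * t = ((t*t : ℕ):ℝ) := by push_cast; ring
    _ ≤ _ := by exact_mod_cast hsup

lemma Lfun_small {d p n t : ℕ} (hp : 2 ≤ p) (S : Fin n → EuclideanSpace ℝ (Fin d))
    (hS : ∀ i c, S i c ∈ gridSet p) {r : ℝ} (hr0 : 0 ≤ r) (hr : r < 1 / ((p:ℝ) - 1)) :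
    Lfun t S r = Lfun t S 0 := by
  have hcap : ∀ k : Fin n, cappedBallCount t S r (S k) = cappedBallCount t S 0 (S k) := by
    intro k
    have hball : ballCount S (S k) r = ballCount S (S k) 0 := by
      apply Nat.card_congr
      apply Equiv.subtypeEquivRight
      intro i
      constructor
      · intro hi
        by_contra hgt
        push_neg at hgt
        have hne : S i ≠ S k := by
          intro h
          rw [h] at hgt
          simp at hgt
        obtain ⟨c, hc⟩ : ∃ c, S i c ≠ S k c := by
          by_contra hall
          push_neg at hall
          exact hne (by ext c; exact hall c)
        have := grid_gap hp (hS i c) (hS k c) hc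
        have h2 := coord_dist_le (S i) (S k) c
        linarith
      · intro hi
        exact le_trans hi hr0
    rw [cappedBallCount, cappedBallCount, if_neg (not_lt.mpr hr0),
      if_neg (not_lt.mpr le_rfl), hball]
  unfold Lfun
  congr 2
  exact Finset.sup_congr rfl fun I _ => Finset.sum_congr rfl fun i _ => hcap i

theorem good_radius_exists (d p n t : ℕ) (hd : 1 ≤ d) (hp : 2 ≤ p) (ht : 1 ≤ t) (htn : t ≤ n)
    (Γ : ℝ) (hΓ : 0 < Γ)
    (S : Fin n → EuclideanSpace ℝ (Fin d)) (hS : ∀ i j, S i j ∈ gridSet p)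
    (h0 : Lfun t S 0 < (t : ℝ) - 2 * Γ) :
    ∃ j : ℕ, j ≤ 2 * p * ⌈Real.sqrt d⌉₊ ∧
      2 * Γ ≤ min ((t : ℝ) - Lfun t S (((j : ℝ) / (2 * p)) / 2))
        (Lfun t S ((j : ℝ) / (2 * p)) - t + 4 * Γ) := by
  classical
  have hp2 : (2:ℝ) ≤ (p:ℝ) := by exact_mod_cast hp
  have hppos : (0:ℝ) < (p:ℝ) := by linarith
  have hp1 : (1:ℝ) ≤ (p:ℝ) - 1 := by linarith
  set J := 2 * p * ⌈Real.sqrt d⌉₊ with hJdef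
  have hSIcc : ∀ i c, S i c ∈ Set.Icc (0:ℝ) 1 := fun i c => grid_mem_Icc hp (hS i c)
  have hPJ : (t:ℝ) - 2*Γ ≤ Lfun t S ((J:ℝ)/(2*(p:ℝ))) := by
    have hJr : ((J:ℝ)/(2*(p:ℝ))) = (⌈Real.sqrt d⌉₊ : ℝ) := by
      rw [hJdef]
      push_cast
      field_simp
    rw [hJr]
    have := Lfun_big ht htn S hSIcc (R := (⌈Real.sqrt d⌉₊:ℝ)) (Nat.le_ceil _)
    linarith
  have hex : ∃ j : ℕ, (t:ℝ) - 2*Γ ≤ Lfun t S ((j:ℝ)/(2*(p:ℝ))) := ⟨J, hPJ⟩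
  set j₀ := Nat.find hex with hj₀def
  have hj₀P : (t:ℝ) - 2*Γ ≤ Lfun t S ((j₀:ℝ)/(2*(p:ℝ))) := Nat.find_spec hex
  have hj₀J : j₀ ≤ J := Nat.find_min' hex hPJ
  have hP0 : ¬ ((t:ℝ) - 2*Γ ≤ Lfun t S (((0:ℕ):ℝ)/(2*(p:ℝ)))) := by
    push_neg
    simpa using h0
  have hj₀pos : 1 ≤ j₀ := by
    rcases Nat.eq_zero_or_pos j₀ with h | h
    · rw [h] at hj₀P
      exact absurd hj₀P hP0
    · exact h
  refine ⟨j₀, hj₀J, ?_⟩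
  rw [le_min_iff]
  refine ⟨?_, by linarith⟩
  have hhalf : ((j₀:ℝ)/(2*(p:ℝ)))/2 = (j₀:ℝ)/(4*(p:ℝ)) := by ring
  rw [hhalf]
  have hkey : Lfun t S ((j₀:ℝ)/(4*(p:ℝ))) < (t:ℝ) - 2*Γ := by
    rcases eq_or_lt_of_le hj₀pos with h1 | h2
    · have heq : Lfun t S ((j₀:ℝ)/(4*(p:ℝ))) = Lfun t S 0 := by
        apply Lfun_small hp S hS
        · positivity
        · rw [← h1]
          push_cast
          rw [div_lt_div_iff₀ (by linarith) (by linarith)]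
          linarith
      linarith
    · have hm : ¬ ((t:ℝ) - 2*Γ ≤ Lfun t S (((j₀ - 1 : ℕ):ℝ)/(2*(p:ℝ)))) :=
        Nat.find_min hex (by omega)
      push_neg at hm
      have hle : (j₀:ℝ)/(4*(p:ℝ)) ≤ ((j₀-1:ℕ):ℝ)/(2*(p:ℝ)) := by
        rw [Nat.cast_sub (by omega)]
        rw [div_le_div_iff₀ (by linarith) (by linarith)]
        have h2' : (2:ℝ) ≤ (j₀:ℝ) := by exact_mod_cast h2
        push_cast
        nlinarith
      have := Lfun_mono t S hle
      linarith
  linarith
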